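/- Let Ω = {(x,y,t) ∈ H¹ : x²+y² < 1, |t| < 1} and v(x,y,t) = t. Then v is H-convex (indeed affine on each horizontal plane), ∂_H v(ξ) = {(2y, −2x)} for every ξ = (x,y,t) ∈ Ω, and ∂_H v(Ω) = B_{R²}(0, 2), the open Euclidean ball of radius 2. -/
import Mathlib


/-- A point of the first Heisenberg group `ℍ¹ = ℝ³`, coordinates `(x, y, t)`. -/
abbrev H1 := ℝ × ℝ × ℝ

/-- Heisenberg group law on `ℍ¹`. -/
def hmul1 (ξ η : H1) : H1 :=
  (ξ.1 + η.1, ξ.2.1 + η.2.1, ξ.2.2 + η.2.2 + 2 * (ξ.2.1 * η.1 - ξ.1 * η.2.1))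

/-- Heisenberg inverse on `ℍ¹`. -/
def hinv1 (ξ : H1) : H1 := (-ξ.1, -ξ.2.1, -ξ.2.2)

/-- Heisenberg dilation on `ℍ¹`. -/
def hdil1 (l : ℝ) (ξ : H1) : H1 := (l * ξ.1, l * ξ.2.1, l ^ 2 * ξ.2.2)

/-- The horizontal plane at `ξ₀ = (x₀,y₀,t₀)`: `t = t₀ + 2(x y₀ - x₀ y)`. -/
def Hplane1 (ξ₀ : H1) : Set H1 :=
  {ξ | ξ.2.2 = ξ₀.2.2 + 2 * (ξ.1 * ξ₀.2.1 - ξ₀.1 * ξ.2.1)}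

/-- Dot product on `ℝ²`. -/
def dot2 (p q : ℝ × ℝ) : ℝ := p.1 * q.1 + p.2 * q.2

/-- The horizontal subdifferential on `ℍ¹`. -/
def subdiff1 (Ω : Set H1) (u : H1 → ℝ) (ξ₀ : H1) : Set (ℝ × ℝ) :=
  {p | ∀ ξ ∈ Ω ∩ Hplane1 ξ₀, u ξ ≥ u ξ₀ + dot2 p (ξ.1 - ξ₀.1, ξ.2.1 - ξ₀.2.1)}

/-- `H`-convexity of a function on a subset of `ℍ¹`. -/
def HConvexOn1 (S : Set H1) (u : H1 → ℝ) : Prop :=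
  ∀ ξ₁ ∈ S, ∀ ξ₂ ∈ S, ξ₁ ∈ Hplane1 ξ₂ → ∀ l ∈ Set.Icc (0 : ℝ) 1,
    u (hmul1 ξ₁ (hdil1 l (hmul1 (hinv1 ξ₁) ξ₂))) ≤ (1 - l) * u ξ₁ + l * u ξ₂

set_option maxHeartbeats 1000000 in
lemma part2_aux : ∀ ξ ∈ {ξ : H1 | ξ.1 ^ 2 + ξ.2.1 ^ 2 < 1 ∧ |ξ.2.2| < 1},
    subdiff1 {ξ : H1 | ξ.1 ^ 2 + ξ.2.1 ^ 2 < 1 ∧ |ξ.2.2| < 1} (fun ξ => ξ.2.2) ξ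
      = {(2 * ξ.2.1, -2 * ξ.1)} := by
  rintro ⟨x, y, t⟩ ⟨hxy, ht⟩
  simp only [Set.mem_setOf_eq] at hxy ht
  ext ⟨p1, p2⟩
  simp only [subdiff1, Set.mem_setOf_eq, Set.mem_singleton_iff, Prod.mk.injEq]
  constructor
  · intro hp
    obtain ⟨ε, hε0, hεa, hεb⟩ : ∃ ε : ℝ, 0 < ε ∧ ε ≤ (1 - (x ^ 2 + y ^ 2)) / 4 ∧
        ε ≤ (1 - |t|) / 4 :=
      ⟨min ((1 - (x ^ 2 + y ^ 2)) / 4) ((1 - |t|) / 4),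
        lt_min (by linarith) (by linarith [abs_nonneg t]),
        min_le_left _ _, min_le_right _ _⟩
    have hta : -1 < t := (abs_lt.mp ht).1
    have htb : t < 1 := (abs_lt.mp ht).2
    have htabs : t ≤ |t| := le_abs_self t
    have htabs' : -|t| ≤ t := neg_abs_le t
    -- membership of the four test points
    have mem1 : ∀ s : ℝ, |s| ≤ ε →
        ((x + s) ^ 2 + y ^ 2 < 1 ∧ |t + 2 * s * y| < 1) := by
      intro s hs
      have hs1 : -ε ≤ s := by cases abs_le.mp hs; linarith
      have hs2 : s ≤ ε := (abs_le.mp hs).2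
      constructor
      · nlinarith [sq_nonneg (x - 1), sq_nonneg (x + 1), sq_nonneg x, sq_nonneg y]
      · rw [abs_lt]
        constructor <;> nlinarith [sq_nonneg (y - 1), sq_nonneg (y + 1), sq_nonneg x, sq_nonneg y]
    have mem2 : ∀ s : ℝ, |s| ≤ ε →
        (x ^ 2 + (y + s) ^ 2 < 1 ∧ |t - 2 * s * x| < 1) := by
      intro s hs
      have hs1 : -ε ≤ s := by cases abs_le.mp hs; linarith
      have hs2 : s ≤ ε := (abs_le.mp hs).2
      constructor
      · nlinarith [sq_nonneg (y - 1), sq_nonneg (y + 1), sq_nonneg x, sq_nonneg y]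
      · rw [abs_lt]
        constructor <;> nlinarith [sq_nonneg (x - 1), sq_nonneg (x + 1), sq_nonneg x, sq_nonneg y]
    have hεabs : |ε| ≤ ε := by rw [abs_of_pos hε0]
    have hεabs' : |(-ε)| ≤ ε := by rw [abs_neg, abs_of_pos hε0]
    have h1 := hp (x + ε, y, t + 2 * ε * y) ⟨(mem1 ε hεabs), by
      simp only [Hplane1, Set.mem_setOf_eq]; ring⟩
    have h2 := hp (x + (-ε), y, t + 2 * (-ε) * y) ⟨(mem1 (-ε) hεabs'), by
      simp only [Hplane1, Set.mem_setOf_eq]; ring⟩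
    have h3 := hp (x, y + ε, t - 2 * ε * x) ⟨(mem2 ε hεabs), by
      simp only [Hplane1, Set.mem_setOf_eq]; ring⟩
    have h4 := hp (x, y + (-ε), t - 2 * (-ε) * x) ⟨(mem2 (-ε) hεabs'), by
      simp only [Hplane1, Set.mem_setOf_eq]; ring⟩
    have h1' : t + 2 * ε * y ≥ t + (p1 * (x + ε - x) + p2 * (y - y)) := by
      simpa [dot2] using h1
    have h2' : t + 2 * (-ε) * y ≥ t + (p1 * (x + -ε - x) + p2 * (y - y)) := by
      simpa [dot2] using h2
    have h3' : t - 2 * ε * x ≥ t + (p1 * (x - x) + p2 * (y + ε - y)) := by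
      simpa [dot2] using h3
    have h4' : t - 2 * (-ε) * x ≥ t + (p1 * (x - x) + p2 * (y + -ε - y)) := by
      simpa [dot2] using h4
    constructor
    · nlinarith [h1', h2', hε0]
    · nlinarith [h3', h4', hε0]
  · rintro ⟨rfl, rfl⟩
    rintro ⟨a, b, c⟩ ⟨-, hpl⟩
    simp only [Hplane1, Set.mem_setOf_eq] at hpl
    simp only [dot2, ge_iff_le]
    nlinarith [hpl]

set_option maxHeartbeats 1000000 in
/-- For `v(x,y,t) = t` on the cylinder `Ω = {x²+y²<1, |t|<1} ⊆ ℍ¹`: `v` is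
`H`-convex, `∂_H v(ξ) = {(2y, -2x)}` for every `ξ = (x,y,t) ∈ Ω`, and
`∂_H v(Ω)` is the open Euclidean ball of radius `2`. -/
theorem vertical_coordinate_normal_mapping :
    HConvexOn1 {ξ : H1 | ξ.1 ^ 2 + ξ.2.1 ^ 2 < 1 ∧ |ξ.2.2| < 1} (fun ξ => ξ.2.2) ∧
    (∀ ξ ∈ {ξ : H1 | ξ.1 ^ 2 + ξ.2.1 ^ 2 < 1 ∧ |ξ.2.2| < 1},
      subdiff1 {ξ : H1 | ξ.1 ^ 2 + ξ.2.1 ^ 2 < 1 ∧ |ξ.2.2| < 1} (fun ξ => ξ.2.2) ξ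
        = {(2 * ξ.2.1, -2 * ξ.1)}) ∧
    (⋃ ξ ∈ {ξ : H1 | ξ.1 ^ 2 + ξ.2.1 ^ 2 < 1 ∧ |ξ.2.2| < 1},
      subdiff1 {ξ : H1 | ξ.1 ^ 2 + ξ.2.1 ^ 2 < 1 ∧ |ξ.2.2| < 1} (fun ξ => ξ.2.2) ξ)
        = {p : ℝ × ℝ | p.1 ^ 2 + p.2 ^ 2 < 4} := by
  have part2 := part2_aux
  refine ⟨?_, part2, ?_⟩
  · rintro ⟨x1, y1, t1⟩ h1 ⟨x2, y2, t2⟩ h2 hpl l ⟨hl0, hl1⟩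
    simp only [Hplane1, Set.mem_setOf_eq] at hpl
    simp only [hmul1, hinv1, hdil1]
    nlinarith [hpl, hl0, hl1]
  · ext ⟨p1, p2⟩
    simp only [Set.mem_iUnion, Set.mem_setOf_eq]
    constructor
    · rintro ⟨ξ, hξ, hp⟩
      rw [part2 ξ hξ] at hp
      simp only [Set.mem_singleton_iff, Prod.mk.injEq] at hp
      obtain ⟨rfl, rfl⟩ := hp
      obtain ⟨hxy, -⟩ := hξ
      nlinarith [hxy]
    · intro hp
      have hmem : ((-p2 / 2, p1 / 2, 0) : H1) ∈
          {ξ : H1 | ξ.1 ^ 2 + ξ.2.1 ^ 2 < 1 ∧ |ξ.2.2| < 1} := by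
        constructor
        · simp only []
          nlinarith [hp]
        · simp
      refine ⟨(-p2 / 2, p1 / 2, 0), hmem, ?_⟩
      rw [part2 (-p2 / 2, p1 / 2, 0) hmem]
      simp only [Set.mem_singleton_iff, Prod.mk.injEq]
      constructor <;> ring
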